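/- For any finite type σ over Ω and any sequence of countable ordinals (α_ξ)_{ξ<ζ} indexed by a countable ordinal ζ ≥ 1, limsup_{ξ→ζ} Iter_{α_ξ}^σ =hp Iter_{limsup_{ξ→ζ} α_ξ}^σ. -/

import Mathlib

/-!  Framework: finite type structure over Ω = countable ordinals,
     limsup/liminf, transfinite iteration functionals, hereditarily
     positive and hereditarily monotone functionals. -/

noncomputable section
namespace IterOrd

open Ordinal

theorem omega1_pos : (0 : Ordinal) < ω₁ := Ordinal.omega0_pos.trans Ordinal.omega0_lt_omega_one

/-- `Om` is Ω, the set of countable ordinals (ordinals `< ω₁`). -/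
abbrev Om : Type 1 := {o : Ordinal // o < ω₁}

/-- Infimum of a subset of Ω (the minimum for nonempty sets; `0` for `∅`). -/
def infOm (s : Set Om) : Om :=
  ⟨sInf (Subtype.val '' s), by
    rcases (Subtype.val '' s).eq_empty_or_nonempty with h | h
    · rw [h]; simpa using omega1_pos
    · obtain ⟨x, _, he⟩ := csInf_mem h
      exact he ▸ x.2⟩

/-- Supremum of a subset of Ω.  Whenever the supremum of the set exists in Ω
(in particular for every countable subset, by regularity of `ω₁`) this is the
genuine supremum; otherwise it takes a junk value. -/
def supOm (s : Set Om) : Om :=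
  if h : sSup (Subtype.val '' s) < ω₁ then ⟨sSup (Subtype.val '' s), h⟩ else ⟨0, omega1_pos⟩

/-- Finite types over the base type `o` (interpreted as Ω). -/
inductive Ty : Type
  | base : Ty
  | arrow : Ty → Ty → Ty
deriving DecidableEq

/-- The full type structure over Ω: `El base = Ω` and
`El (arrow σ τ)` is the set of all functions `El σ → El τ`. -/
@[reducible] def El : Ty → Type 1
  | .base => Om
  | .arrow σ τ => El σ → El τ

/-- The order on each `El σ`: the ordinal order at base type, pointwise at arrow types. -/
def Le : (σ : Ty) → El σ → El σ → Prop
  | .base => fun x y => x ≤ y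
  | .arrow σ τ => fun f g => ∀ x : El σ, Le τ (f x) (g x)

/-- Suprema, computed pointwise at function types. -/
def supEl : (σ : Ty) → Set (El σ) → El σ
  | .base => supOm
  | .arrow σ τ => fun S (x : El σ) => supEl τ ((fun f : El (.arrow σ τ) => f x) '' S)

/-- Infima, computed pointwise at function types. -/
def infEl : (σ : Ty) → Set (El σ) → El σ
  | .base => infOm
  | .arrow σ τ => fun S (x : El σ) => infEl τ ((fun f : El (.arrow σ τ) => f x) '' S)

/-- `limsup_{ξ→ζ} f ξ = inf_{γ<ζ} sup_{γ≤ξ<ζ} f ξ`. -/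
def limsupEl (σ : Ty) (ζ : Ordinal) (f : ∀ ξ : Ordinal, ξ < ζ → El σ) : El σ :=
  infEl σ {y | ∃ γ, ∃ _ : γ < ζ, y = supEl σ {z | ∃ ξ, ∃ h : ξ < ζ, γ ≤ ξ ∧ z = f ξ h}}

/-- `liminf_{ξ→ζ} f ξ = sup_{γ<ζ} inf_{γ≤ξ<ζ} f ξ`. -/
def liminfEl (σ : Ty) (ζ : Ordinal) (f : ∀ ξ : Ordinal, ξ < ζ → El σ) : El σ :=
  supEl σ {y | ∃ γ, ∃ _ : γ < ζ, y = infEl σ {z | ∃ ξ, ∃ h : ξ < ζ, γ ≤ ξ ∧ z = f ξ h}}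

/-- `limsup` of a ζ-indexed sequence of ordinals. -/
def oLimsup (ζ : Ordinal) (a : Ordinal → Ordinal) : Ordinal :=
  sInf {s | ∃ γ, γ < ζ ∧ s = sSup (a '' {ξ | γ ≤ ξ ∧ ξ < ζ})}

/-- `liminf` of a ζ-indexed sequence of ordinals. -/
def oLiminf (ζ : Ordinal) (a : Ordinal → Ordinal) : Ordinal :=
  sSup {s | ∃ γ, γ < ζ ∧ s = sInf (a '' {ξ | γ ≤ ξ ∧ ξ < ζ})}

/-- The α-iteration functional of type σ:
`Iter 0 f x = x`, `Iter (α+1) f x = f (Iter α f x)`, and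
`Iter μ f x = limsup_{ξ→μ} Iter ξ f x` for limit μ. -/
def Iter (σ : Ty) (α : Ordinal) : (El σ → El σ) → El σ → El σ :=
  Ordinal.limitRecOn (motive := fun _ => (El σ → El σ) → El σ → El σ) α
    (fun _ x => x)
    (fun _ ih f x => f (ih f x))
    (fun μ _ ih f x => limsupEl σ μ (fun ξ h => ih ξ h f x))

/-- The pair (hereditarily positive, ≤hp), defined simultaneously by recursion on the type.
Every element of `Ω` and of `Ω_{ρ→τ}` with `ρ ≠ τ` is h.p., and `≤hp` there is `≤`;
`f : Ω_{τ→τ}` is h.p. iff it preserves h.p., is inflationary on h.p. arguments and is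
monotone (w.r.t. `≤hp`) on h.p. arguments; `f ≤hp f'` on `Ω_{τ→τ}` iff `f x ≤hp f' x`
for every h.p. `x`. -/
def HPaux : (σ : Ty) → (El σ → Prop) × (El σ → El σ → Prop)
  | .base => ⟨fun _ => True, fun x y => x ≤ y⟩
  | .arrow ρ τ =>
      ⟨fun f =>
        if h : ρ = τ then
          (∀ x, (HPaux ρ).1 x → (HPaux τ).1 (f x)) ∧
          (∀ x, (HPaux ρ).1 x → (HPaux τ).2 (cast (congrArg El h) x) (f x)) ∧
          (∀ x y, (HPaux ρ).1 x → (HPaux ρ).1 y → (HPaux ρ).2 x y → (HPaux τ).2 (f x) (f y))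
        else True,
       fun f g =>
        if ρ = τ then ∀ x, (HPaux ρ).1 x → (HPaux τ).2 (f x) (g x)
        else Le (.arrow ρ τ) f g⟩

/-- Hereditarily positive functionals. -/
def Hp (σ : Ty) : El σ → Prop := (HPaux σ).1

/-- The order `≤hp`. -/
def HpLe (σ : Ty) : El σ → El σ → Prop := (HPaux σ).2

/-- `f =hp g` iff `f ≤hp g` and `g ≤hp f`. -/
def HpEq (σ : Ty) (f g : El σ) : Prop := HpLe σ f g ∧ HpLe σ g f

/-- The pair (hereditarily monotone, ≤ on the hereditarily monotone structure),
by recursion on the type.  `f` is hereditarily monotone iff it maps hereditarily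
monotone arguments to hereditarily monotone values, monotonically; the order is
pointwise over hereditarily monotone arguments (i.e. the order of `Ω^mon`). -/
def HMaux : (σ : Ty) → (El σ → Prop) × (El σ → El σ → Prop)
  | .base => ⟨fun _ => True, fun x y => x ≤ y⟩
  | .arrow σ τ =>
      ⟨fun f =>
        (∀ x, (HMaux σ).1 x → (HMaux τ).1 (f x)) ∧
        (∀ x y, (HMaux σ).1 x → (HMaux σ).1 y → (HMaux σ).2 x y → (HMaux τ).2 (f x) (f y)),
       fun f g => ∀ x, (HMaux σ).1 x → (HMaux τ).2 (f x) (g x)⟩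

/-- Hereditarily monotone functionals: the members of the type structure `Ω^mon`. -/
def HM (σ : Ty) : El σ → Prop := (HMaux σ).1

/-- The (pointwise) order of the hereditarily monotone type structure `Ω^mon`. -/
def LeHM (σ : Ty) : El σ → El σ → Prop := (HMaux σ).2

/-- Equality in the hereditarily monotone type structure `Ω^mon`. -/
def EqHM (σ : Ty) (f g : El σ) : Prop := LeHM σ f g ∧ LeHM σ g f

/-! ### auxiliary lemmas -/

theorem countable_Iio {ζ : Ordinal} (hζ : ζ < ω₁) : (Set.Iio ζ).Countable := by
  rw [Cardinal.countable_iff_lt_aleph_one, Ordinal.mk_Iio_ordinal, Cardinal.lift_lt_aleph_one,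
    ← Cardinal.lt_ord, Cardinal.ord_aleph]
  exact hζ

theorem sSup_lt_omega1 {s : Set Ordinal} (hc : s.Countable) (hs : ∀ x ∈ s, x < ω₁) :
    sSup s < ω₁ := by
  rcases s.eq_empty_or_nonempty with rfl | hne
  · rw [csSup_empty]; exact omega1_pos
  obtain ⟨f, rfl⟩ := hc.exists_eq_range hne
  have h1 : sSup (Set.range f) = iSup f := rfl
  rw [h1]
  exact Ordinal.iSup_lt_omega_one fun n => by
    exact hs _ ⟨n, rfl⟩

/-! ### unfolding lemmas for Hp / HpLe -/

theorem hp_base (x : Om) : Hp .base x := trivial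

theorem hp_arrow_ne {ρ τ : Ty} (h : ρ ≠ τ) (f : El (.arrow ρ τ)) : Hp (.arrow ρ τ) f := by
  unfold Hp HPaux
  simp only [dif_neg h]

theorem hp_arrow_self {σ : Ty} (f : El (.arrow σ σ)) :
    Hp (.arrow σ σ) f ↔
      (∀ x, Hp σ x → Hp σ (f x)) ∧ (∀ x, Hp σ x → HpLe σ x (f x)) ∧
      (∀ x y, Hp σ x → Hp σ y → HpLe σ x y → HpLe σ (f x) (f y)) := by
  show (if h : σ = σ then
          (∀ x, Hp σ x → Hp σ (f x)) ∧
          (∀ x, Hp σ x → HpLe σ (cast (congrArg El h) x) (f x)) ∧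
          (∀ x y, Hp σ x → Hp σ y → HpLe σ x y → HpLe σ (f x) (f y))
        else True) ↔ _
  rw [dif_pos rfl]
  exact Iff.rfl

theorem hpLe_arrow_self {σ : Ty} (f g : El (.arrow σ σ)) :
    HpLe (.arrow σ σ) f g ↔ ∀ x, Hp σ x → HpLe σ (f x) (g x) := by
  show (if σ = σ then ∀ x, Hp σ x → HpLe σ (f x) (g x) else Le (.arrow σ σ) f g) ↔ _
  rw [if_pos rfl]

theorem hpLe_arrow_ne {ρ τ : Ty} (h : ρ ≠ τ) (f g : El (.arrow ρ τ)) :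
    HpLe (.arrow ρ τ) f g ↔ Le (.arrow ρ τ) f g := by
  show (if ρ = τ then ∀ x, Hp ρ x → HpLe τ (f x) (g x) else Le (.arrow ρ τ) f g) ↔ _
  rw [if_neg h]

/-! ### lemmas about Le and sup/inf -/

theorem leRefl : ∀ (σ : Ty) (x : El σ), Le σ x x := by
  intro σ
  induction σ with
  | base => intro x; exact le_rfl
  | arrow ρ τ ihρ ihτ => intro f x; exact ihτ (f x)

theorem leTrans : ∀ (σ : Ty) {x y z : El σ}, Le σ x y → Le σ y z → Le σ x z := by
  intro σ
  induction σ with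
  | base => intro x y z h1 h2; exact le_trans h1 h2
  | arrow ρ τ ihρ ihτ => intro f g h h1 h2 x; exact ihτ (h1 x) (h2 x)

theorem leSup : ∀ (σ : Ty) (S : Set (El σ)), S.Countable → ∀ z ∈ S, Le σ z (supEl σ S) := by
  intro σ
  induction σ with
  | base =>
    intro S hc z hz
    show z.1 ≤ (supOm S).1
    unfold supOm
    have hlt : sSup (Subtype.val '' S) < ω₁ :=
      sSup_lt_omega1 (hc.image _) (by rintro x ⟨w, _, rfl⟩; exact w.2)
    rw [dif_pos hlt]
    exact le_csSup ⟨ω₁, by rintro x ⟨w, _, rfl⟩; exact w.2.le⟩ ⟨z, hz, rfl⟩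
  | arrow ρ τ ihρ ihτ =>
    intro S hc z hz x
    exact ihτ _ (hc.image _) _ ⟨z, hz, rfl⟩

theorem supLe : ∀ (σ : Ty) (S : Set (El σ)) (y : El σ), (∀ z ∈ S, Le σ z y) →
    Le σ (supEl σ S) y := by
  intro σ
  induction σ with
  | base =>
    intro S y h
    show (supOm S).1 ≤ y.1
    unfold supOm
    have hle : sSup (Subtype.val '' S) ≤ y.1 := by
      rcases (Subtype.val '' S).eq_empty_or_nonempty with he | hne
      · rw [he, csSup_empty]; simp
      · refine csSup_le hne ?_
        rintro x ⟨w, hw, rfl⟩; exact h w hw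
    rw [dif_pos (lt_of_le_of_lt hle y.2)]
    exact hle
  | arrow ρ τ ihρ ihτ =>
    intro S y h x
    refine ihτ _ _ ?_
    rintro _ ⟨z, hz, rfl⟩
    exact h z hz x

theorem infLe : ∀ (σ : Ty) (S : Set (El σ)), ∀ z ∈ S, Le σ (infEl σ S) z := by
  intro σ
  induction σ with
  | base =>
    intro S z hz
    show (infOm S).1 ≤ z.1
    exact csInf_le (OrderBot.bddBelow _) ⟨z, hz, rfl⟩
  | arrow ρ τ ihρ ihτ =>
    intro S z hz x
    exact ihτ _ _ ⟨z, hz, rfl⟩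

theorem leInf : ∀ (σ : Ty) (S : Set (El σ)) (y : El σ), S.Nonempty → (∀ z ∈ S, Le σ y z) →
    Le σ y (infEl σ S) := by
  intro σ
  induction σ with
  | base =>
    intro S y hne h
    show y.1 ≤ (infOm S).1
    refine le_csInf (hne.image _) ?_
    rintro x ⟨w, hw, rfl⟩; exact h w hw
  | arrow ρ τ ihρ ihτ =>
    intro S y hne h x
    refine ihτ _ _ (hne.image _) ?_
    rintro _ ⟨z, hz, rfl⟩
    exact h z hz x

/-! ### lemmas about HpLe and sup/inf -/

theorem hpLeRefl : ∀ (σ : Ty) (x : El σ), HpLe σ x x := by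
  intro σ
  induction σ with
  | base => intro x; exact le_rfl
  | arrow ρ τ ihρ ihτ =>
    intro f
    by_cases h : ρ = τ
    · subst h
      rw [hpLe_arrow_self]
      intro x _; exact ihτ _
    · rw [hpLe_arrow_ne h]
      exact leRefl _ f

theorem hpLeTrans : ∀ (σ : Ty) {x y z : El σ}, HpLe σ x y → HpLe σ y z → HpLe σ x z := by
  intro σ
  induction σ with
  | base => intro x y z h1 h2; exact le_trans h1 h2
  | arrow ρ τ ihρ ihτ =>
    intro f g k h1 h2
    by_cases h : ρ = τ
    · subst h
      rw [hpLe_arrow_self] at h1 h2 ⊢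
      intro x hx; exact ihτ (h1 x hx) (h2 x hx)
    · rw [hpLe_arrow_ne h] at h1 h2 ⊢
      exact leTrans _ h1 h2

theorem hpLeSup : ∀ (σ : Ty) (S : Set (El σ)), S.Countable → ∀ z ∈ S, HpLe σ z (supEl σ S) := by
  intro σ
  induction σ with
  | base => intro S hc z hz; exact leSup .base S hc z hz
  | arrow ρ τ ihρ ihτ =>
    intro S hc z hz
    by_cases h : ρ = τ
    · subst h
      rw [hpLe_arrow_self]
      intro x hx
      exact ihτ _ (hc.image _) _ ⟨z, hz, rfl⟩
    · rw [hpLe_arrow_ne h]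
      exact leSup _ S hc z hz

theorem supHpLe : ∀ (σ : Ty) (S : Set (El σ)) (y : El σ), (∀ z ∈ S, HpLe σ z y) →
    HpLe σ (supEl σ S) y := by
  intro σ
  induction σ with
  | base => intro S y h; exact supLe .base S y h
  | arrow ρ τ ihρ ihτ =>
    intro S y h
    by_cases hρτ : ρ = τ
    · subst hρτ
      rw [hpLe_arrow_self]
      intro x hx
      refine ihτ _ _ ?_
      rintro _ ⟨z, hz, rfl⟩
      exact (hpLe_arrow_self z y).mp (h z hz) x hx
    · rw [hpLe_arrow_ne hρτ]
      exact supLe _ S y fun z hz => (hpLe_arrow_ne hρτ z y).mp (h z hz)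

theorem infHpLe : ∀ (σ : Ty) (S : Set (El σ)), ∀ z ∈ S, HpLe σ (infEl σ S) z := by
  intro σ
  induction σ with
  | base => intro S z hz; exact infLe .base S z hz
  | arrow ρ τ ihρ ihτ =>
    intro S z hz
    by_cases h : ρ = τ
    · subst h
      rw [hpLe_arrow_self]
      intro x hx
      exact ihτ _ _ ⟨z, hz, rfl⟩
    · rw [hpLe_arrow_ne h]
      exact infLe _ S z hz

theorem hpLeInf : ∀ (σ : Ty) (S : Set (El σ)) (y : El σ), S.Nonempty → (∀ z ∈ S, HpLe σ y z) →
    HpLe σ y (infEl σ S) := by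
  intro σ
  induction σ with
  | base => intro S y hne h; exact leInf .base S y hne h
  | arrow ρ τ ihρ ihτ =>
    intro S y hne h
    by_cases hρτ : ρ = τ
    · subst hρτ
      rw [hpLe_arrow_self]
      intro x hx
      refine ihτ _ _ (hne.image _) ?_
      rintro _ ⟨z, hz, rfl⟩
      exact (hpLe_arrow_self y z).mp (h z hz) x hx
    · rw [hpLe_arrow_ne hρτ]
      exact leInf _ S y hne fun z hz => (hpLe_arrow_ne hρτ y z).mp (h z hz)

/-! ### Hp of sup/inf -/

theorem hpSup : ∀ (σ : Ty) (S : Set (El σ)), S.Countable → S.Nonempty →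
    (∀ z ∈ S, Hp σ z) → Hp σ (supEl σ S) := by
  intro σ
  induction σ with
  | base => intro S _ _ _; exact trivial
  | arrow ρ τ ihρ ihτ =>
    intro S hc hne hhp
    by_cases h : ρ = τ
    · subst h
      rw [hp_arrow_self]
      refine ⟨?_, ?_, ?_⟩
      · intro x hx
        refine ihτ _ (hc.image _) (hne.image _) ?_
        rintro _ ⟨z, hz, rfl⟩
        exact ((hp_arrow_self z).mp (hhp z hz)).1 x hx
      · intro x hx
        obtain ⟨z₀, hz₀⟩ := hne
        refine hpLeTrans _ (((hp_arrow_self z₀).mp (hhp z₀ hz₀)).2.1 x hx) ?_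
        exact hpLeSup _ _ (hc.image _) _ ⟨z₀, hz₀, rfl⟩
      · intro x y hx hy hxy
        refine supHpLe _ _ _ ?_
        rintro _ ⟨z, hz, rfl⟩
        refine hpLeTrans _ (((hp_arrow_self z).mp (hhp z hz)).2.2 x y hx hy hxy) ?_
        exact hpLeSup _ _ (hc.image _) _ ⟨z, hz, rfl⟩
    · exact hp_arrow_ne h _

theorem hpInf : ∀ (σ : Ty) (S : Set (El σ)), S.Nonempty →
    (∀ z ∈ S, Hp σ z) → Hp σ (infEl σ S) := by
  intro σ
  induction σ with
  | base => intro S _ _; exact trivial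
  | arrow ρ τ ihρ ihτ =>
    intro S hne hhp
    by_cases h : ρ = τ
    · subst h
      rw [hp_arrow_self]
      refine ⟨?_, ?_, ?_⟩
      · intro x hx
        refine ihτ _ (hne.image _) ?_
        rintro _ ⟨z, hz, rfl⟩
        exact ((hp_arrow_self z).mp (hhp z hz)).1 x hx
      · intro x hx
        refine hpLeInf _ _ _ (hne.image _) ?_
        rintro _ ⟨z, hz, rfl⟩
        exact ((hp_arrow_self z).mp (hhp z hz)).2.1 x hx
      · intro x y hx hy hxy
        refine hpLeInf _ _ _ (hne.image _) ?_
        rintro _ ⟨z, hz, rfl⟩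
        refine hpLeTrans _ (infHpLe _ _ _ ⟨z, hz, rfl⟩) ?_
        exact ((hp_arrow_self z).mp (hhp z hz)).2.2 x y hx hy hxy
    · exact hp_arrow_ne h _

/-! ### tail sets -/

theorem tail_countable {σ : Ty} {ζ : Ordinal} (hζ : ζ < ω₁) (g : ∀ ξ, ξ < ζ → El σ)
    (γ : Ordinal) : {z | ∃ ξ, ∃ h : ξ < ζ, γ ≤ ξ ∧ z = g ξ h}.Countable := by
  have : Countable (Set.Iio ζ) := (countable_Iio hζ).to_subtype
  refine Set.Countable.mono ?_ (Set.countable_range fun p : Set.Iio ζ => g p.1 p.2)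
  rintro z ⟨ξ, h, _, rfl⟩
  exact ⟨⟨ξ, h⟩, rfl⟩

theorem hp_limsup {σ : Ty} {ζ : Ordinal} (hζ : ζ < ω₁) (h0 : 0 < ζ)
    (g : ∀ ξ, ξ < ζ → El σ) (hg : ∀ ξ h, Hp σ (g ξ h)) : Hp σ (limsupEl σ ζ g) := by
  unfold limsupEl
  refine hpInf σ _ ⟨_, 0, h0, rfl⟩ ?_
  rintro y ⟨γ, hγ, rfl⟩
  refine hpSup σ _ (tail_countable hζ g γ) ⟨g γ hγ, γ, hγ, le_rfl, rfl⟩ ?_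
  rintro z ⟨ξ, h, _, rfl⟩
  exact hg ξ h

/-! ### Iter equations -/

theorem iter_zero (σ : Ty) (f : El σ → El σ) (x : El σ) : Iter σ 0 f x = x := by
  unfold Iter
  rw [Ordinal.limitRecOn_zero]

theorem iter_succ (σ : Ty) (α : Ordinal) (f : El σ → El σ) (x : El σ) :
    Iter σ (Order.succ α) f x = f (Iter σ α f x) := by
  unfold Iter
  rw [Ordinal.limitRecOn_succ]

theorem iter_limit (σ : Ty) {μ : Ordinal} (f : El σ → El σ) (x : El σ) (h : Order.IsSuccLimit μ) :
    Iter σ μ f x = limsupEl σ μ (fun ξ _ => Iter σ ξ f x) := by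
  unfold Iter
  rw [Ordinal.limitRecOn_limit _ _ _ _ h]

/-! ### Iter preserves Hp and is monotone in the ordinal -/

theorem hp_iter : ∀ (α : Ordinal), α < ω₁ → ∀ (σ : Ty) (f : El σ → El σ) (x : El σ),
    Hp (.arrow σ σ) f → Hp σ x → Hp σ (Iter σ α f x) := by
  intro α
  induction α using Ordinal.limitRecOn with
  | zero =>
    intro _ σ f x hf hx
    rw [iter_zero]; exact hx
  | add_one α ih =>
    rw [Ordinal.add_one_eq_succ]
    intro hα σ f x hf hx
    rw [iter_succ]
    exact ((hp_arrow_self f).mp hf).1 _ (ih ((Order.le_succ α).trans_lt hα) σ f x hf hx)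
  | limit μ hlim ih =>
    intro hμ σ f x hf hx
    rw [iter_limit σ f x hlim]
    exact hp_limsup hμ hlim.pos _ fun ξ h => ih ξ h (h.trans hμ) σ f x hf hx

theorem iter_mono : ∀ (β : Ordinal), β < ω₁ → ∀ (σ : Ty) (f : El σ → El σ) (x : El σ),
    Hp (.arrow σ σ) f → Hp σ x → ∀ α ≤ β, HpLe σ (Iter σ α f x) (Iter σ β f x) := by
  intro β
  induction β using Ordinal.limitRecOn with
  | zero =>
    intro _ σ f x hf hx α hα
    rw [nonpos_iff_eq_zero] at hα
    subst hα
    exact hpLeRefl σ _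
  | add_one β ih =>
    rw [Ordinal.add_one_eq_succ]
    intro hβ σ f x hf hx α hα
    have hβ' : β < ω₁ := (Order.le_succ β).trans_lt hβ
    rcases eq_or_lt_of_le hα with rfl | h
    · exact hpLeRefl σ _
    · have hαβ : α ≤ β := Order.lt_succ_iff.mp h
      refine hpLeTrans σ (ih hβ' σ f x hf hx α hαβ) ?_
      rw [iter_succ]
      exact ((hp_arrow_self f).mp hf).2.1 _ (hp_iter β hβ' σ f x hf hx)
  | limit μ hlim ih =>
    intro hμ σ f x hf hx α hα
    rcases eq_or_lt_of_le hα with rfl | hαμ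
    · exact hpLeRefl σ _
    rw [iter_limit σ f x hlim]
    unfold limsupEl
    refine hpLeInf σ _ _ ⟨_, 0, hlim.pos, rfl⟩ ?_
    rintro y ⟨γ, hγ, rfl⟩
    have hη : max α γ < μ := max_lt hαμ hγ
    refine hpLeTrans σ (ih (max α γ) hη (hη.trans hμ) σ f x hf hx α (le_max_left _ _)) ?_
    exact hpLeSup σ _ (tail_countable hμ _ γ) _ ⟨max α γ, hη, le_max_right _ _, rfl⟩

/-! ### limsup commutes with application -/

theorem limsupEl_apply (ρ τ : Ty) (ζ : Ordinal) (F : ∀ ξ, ξ < ζ → El (.arrow ρ τ))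
    (g : El ρ) :
    limsupEl (.arrow ρ τ) ζ F g = limsupEl τ ζ (fun ξ h => F ξ h g) := by
  unfold limsupEl
  show infEl τ _ = infEl τ _
  congr 1
  ext y
  constructor
  · rintro ⟨_, ⟨γ, hγ, rfl⟩, rfl⟩
    refine ⟨γ, hγ, ?_⟩
    show supEl τ _ = supEl τ _
    congr 1
    ext z
    constructor
    · rintro ⟨_, ⟨ξ, h, hle, rfl⟩, rfl⟩
      exact ⟨ξ, h, hle, rfl⟩
    · rintro ⟨ξ, h, hle, rfl⟩
      exact ⟨F ξ h, ⟨ξ, h, hle, rfl⟩, rfl⟩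
  · rintro ⟨γ, hγ, hy⟩
    refine ⟨supEl (.arrow ρ τ) {z | ∃ ξ, ∃ h : ξ < ζ, γ ≤ ξ ∧ z = F ξ h}, ⟨γ, hγ, rfl⟩, ?_⟩
    rw [hy]
    show supEl τ _ = supEl τ _
    congr 1
    ext z
    constructor
    · rintro ⟨_, ⟨ξ, h, hle, rfl⟩, rfl⟩
      exact ⟨ξ, h, hle, rfl⟩
    · rintro ⟨ξ, h, hle, rfl⟩
      exact ⟨F ξ h, ⟨ξ, h, hle, rfl⟩, rfl⟩


/-- For any finite type `σ` and any sequence of countable ordinals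
`(α_ξ)_{ξ<ζ}` with `ζ ≥ 1` countable:
`limsup_{ξ→ζ} Iter_{α_ξ}^σ =hp Iter_{limsup_{ξ→ζ} α_ξ}^σ`. -/
theorem limsup_iter_hpEq_iter_limsup (σ : Ty) (ζ : Ordinal) (hζ1 : 1 ≤ ζ) (hζ : ζ < ω₁)
    (a : Ordinal → Ordinal) (ha : ∀ ξ, ξ < ζ → a ξ < ω₁) :
    HpEq (.arrow (.arrow σ σ) (.arrow σ σ))
      (limsupEl (.arrow (.arrow σ σ) (.arrow σ σ)) ζ (fun ξ _ => Iter σ (a ξ)))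
      (Iter σ (oLimsup ζ a)) := by
  have h0 : (0 : Ordinal) < ζ := lt_of_lt_of_le zero_lt_one hζ1
  set β := oLimsup ζ a with hβdef
  have hTne : {s | ∃ γ, γ < ζ ∧ s = sSup (a '' {ξ | γ ≤ ξ ∧ ξ < ζ})}.Nonempty :=
    ⟨_, 0, h0, rfl⟩
  have hβT : β ∈ {s | ∃ γ, γ < ζ ∧ s = sSup (a '' {ξ | γ ≤ ξ ∧ ξ < ζ})} := by
    rw [hβdef]; exact csInf_mem hTne
  obtain ⟨γ₀, hγ₀, hβeq⟩ := hβT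
  have hbdd : ∀ γ : Ordinal, BddAbove (a '' {ξ | γ ≤ ξ ∧ ξ < ζ}) :=
    fun γ => ⟨ω₁, by rintro x ⟨ξ, hξ, rfl⟩; exact (ha ξ hξ.2).le⟩
  have himg : ∀ γ : Ordinal, (a '' {ξ | γ ≤ ξ ∧ ξ < ζ}).Countable := fun γ =>
    Set.Countable.image
      (Set.Countable.mono (fun ξ hξ => hξ.2) (countable_Iio hζ)) a
  have hslt : ∀ γ : Ordinal, sSup (a '' {ξ | γ ≤ ξ ∧ ξ < ζ}) < ω₁ := fun γ =>
    sSup_lt_omega1 (himg γ) (by rintro x ⟨ξ, hξ, rfl⟩; exact ha ξ hξ.2)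
  have hβω : β < ω₁ := hβeq ▸ hslt γ₀
  constructor
  · -- limsup ≤hp Iter β
    rw [hpLe_arrow_self]
    intro f hf
    rw [hpLe_arrow_self]
    intro x hx
    rw [limsupEl_apply, limsupEl_apply]
    unfold limsupEl
    refine hpLeTrans σ (infHpLe σ _ _ ⟨γ₀, hγ₀, rfl⟩) ?_
    refine supHpLe σ _ _ ?_
    rintro z ⟨ξ, hξ, hγξ, rfl⟩
    have hle : a ξ ≤ β := by
      rw [hβeq]
      exact le_csSup (hbdd γ₀) ⟨ξ, ⟨hγξ, hξ⟩, rfl⟩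
    exact iter_mono β hβω σ f x hf hx (a ξ) hle
  · -- Iter β ≤hp limsup
    rw [hpLe_arrow_self]
    intro f hf
    rw [hpLe_arrow_self]
    intro x hx
    rw [limsupEl_apply, limsupEl_apply]
    unfold limsupEl
    refine hpLeInf σ _ _ ⟨_, 0, h0, rfl⟩ ?_
    rintro y ⟨γ, hγ, rfl⟩
    have hγ' : max γ γ₀ < ζ := max_lt hγ hγ₀
    have hs : β = sSup (a '' {ξ | max γ γ₀ ≤ ξ ∧ ξ < ζ}) := by
      refine le_antisymm ?_ ?_
      · rw [hβdef]
        exact csInf_le (OrderBot.bddBelow _) ⟨max γ γ₀, hγ', rfl⟩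
      · rw [hβeq]
        refine csSup_le_csSup (hbdd γ₀) ⟨a (max γ γ₀), max γ γ₀, ⟨le_rfl, hγ'⟩, rfl⟩ ?_
        exact Set.image_mono (fun ξ hξ => ⟨(le_max_right γ γ₀).trans hξ.1, hξ.2⟩)
    by_cases hatt : ∃ ξ, (max γ γ₀ ≤ ξ ∧ ξ < ζ) ∧ a ξ = β
    · obtain ⟨ξ, ⟨h1, h2⟩, h3⟩ := hatt
      rw [← h3]
      exact hpLeSup σ _ (tail_countable hζ _ γ) _ ⟨ξ, h2, (le_max_left γ γ₀).trans h1, rfl⟩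
    · push_neg at hatt
      have hlt' : ∀ ξ, max γ γ₀ ≤ ξ → ξ < ζ → a ξ < β := fun ξ h1 h2 =>
        lt_of_le_of_ne (by rw [hs]; exact le_csSup (hbdd _) ⟨ξ, ⟨h1, h2⟩, rfl⟩)
          (hatt ξ ⟨h1, h2⟩)
      have hβlim : Order.IsSuccLimit β := by
        rcases Ordinal.zero_or_succ_or_isSuccLimit β with h | ⟨δ, hδ⟩ | h
        · have hc := hlt' (max γ γ₀) le_rfl hγ'
          rw [h] at hc
          exact absurd hc (not_lt_zero (a := a (max γ γ₀)))
        · exfalso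
          have hle : sSup (a '' {ξ | max γ γ₀ ≤ ξ ∧ ξ < ζ}) ≤ δ := by
            refine csSup_le ⟨a (max γ γ₀), max γ γ₀, ⟨le_rfl, hγ'⟩, rfl⟩ ?_
            rintro b ⟨ξ, hξ, rfl⟩
            have hc := hlt' ξ hξ.1 hξ.2
            rw [← hδ] at hc
            exact Order.lt_succ_iff.mp hc
          rw [← hs, ← hδ] at hle
          exact (Order.lt_succ δ).not_ge hle
        · exact h
      rw [iter_limit σ f x hβlim]
      unfold limsupEl
      refine hpLeTrans σ (infHpLe σ _ _ ⟨0, hβlim.pos, rfl⟩) ?_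
      refine supHpLe σ _ _ ?_
      rintro z ⟨η, hη, _, rfl⟩
      have hex : ∃ ξ, (max γ γ₀ ≤ ξ ∧ ξ < ζ) ∧ η < a ξ := by
        by_contra hcon
        push_neg at hcon
        have hle : sSup (a '' {ξ | max γ γ₀ ≤ ξ ∧ ξ < ζ}) ≤ η := by
          refine csSup_le ⟨a (max γ γ₀), max γ γ₀, ⟨le_rfl, hγ'⟩, rfl⟩ ?_
          rintro b ⟨ξ, hξ, rfl⟩
          exact hcon ξ hξ
        rw [← hs] at hle
        exact hη.not_ge hle
      obtain ⟨ξ, ⟨h1, h2⟩, h3⟩ := hex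
      refine hpLeTrans σ (iter_mono (a ξ) (ha ξ h2) σ f x hf hx η h3.le) ?_
      exact hpLeSup σ _ (tail_countable hζ _ γ) _ ⟨ξ, h2, (le_max_left γ γ₀).trans h1, rfl⟩

end IterOrd
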